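/- Suppose P is primitive and doubly stochastic. Let F := {z ∈ ℝ^{Nn} : z = A(z)} and, for ν ∈ ℕ, F_ν := {z ∈ ℝ^{Nn} : z = A_ν(z)}. Then for every ε > 0 there exists ν̄ > 0 such that for all ν ≥ ν̄, sup_{z ∈ F_ν} inf_{w ∈ F} ‖z − w‖ ≤ ε. (Lemma 2.) -/

import Mathlib

open Matrix Filter Topology Finset
open scoped Kronecker

noncomputable section

/-- Euclidean norm of a finitely-indexed real vector. -/
def eunorm {ι : Type*} [Fintype ι] (x : ι → ℝ) : ℝ := Real.sqrt (x ⬝ᵥ x)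

/-- `S`-weighted norm `‖x‖_S = √(xᵀ S x)`. -/
def wnorm {ι : Type*} [Fintype ι] (S : Matrix ι ι ℝ) (x : ι → ℝ) : ℝ :=
  Real.sqrt (x ⬝ᵥ S.mulVec x)

/-- Quadratic cost `J(x,z) = q·xᵀQx + 2(Cz+c)ᵀx`. -/
def cost {n : ℕ} (Q C : Matrix (Fin n) (Fin n) ℝ) (qi : ℝ) (ci : Fin n → ℝ)
    (x z : Fin n → ℝ) : ℝ :=
  qi * (x ⬝ᵥ Q.mulVec x) + 2 * ((C.mulVec z + ci) ⬝ᵥ x)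

/-- `xst` is the optimal-response map: for every `z`, `xst z` minimizes the cost over `X`. -/
def IsOptResp {n : ℕ} (X : Set (Fin n → ℝ)) (Q C : Matrix (Fin n) (Fin n) ℝ)
    (qi : ℝ) (ci : Fin n → ℝ) (xst : (Fin n → ℝ) → (Fin n → ℝ)) : Prop :=
  ∀ z, xst z ∈ X ∧ ∀ y ∈ X, cost Q C qi ci (xst z) z ≤ cost Q C qi ci y z

/-- Stacked optimal responses `x⋆(z) = (x^{1⋆}(z^1);…;x^{N⋆}(z^N))`. -/
def extMap {n N : ℕ} (xstar : Fin N → (Fin n → ℝ) → (Fin n → ℝ))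
    (z : Fin N × Fin n → ℝ) : Fin N × Fin n → ℝ :=
  fun p => xstar p.1 (fun j => z (p.1, j)) p.2

/-- Extended aggregation map `A_ν(z) = (P^ν ⊗ I_n) x⋆(z)`. -/
def aggMap {n N : ℕ} (P : Matrix (Fin N) (Fin N) ℝ) (ν : ℕ)
    (xstar : Fin N → (Fin n → ℝ) → (Fin n → ℝ)) (z : Fin N × Fin n → ℝ) :
    Fin N × Fin n → ℝ :=
  ((P ^ ν) ⊗ₖ (1 : Matrix (Fin n) (Fin n) ℝ)).mulVec (extMap xstar z)

/-- The matrix `(1/N)·1_N 1_Nᵀ` with all entries `1/N`. -/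
def avgMat (N : ℕ) : Matrix (Fin N) (Fin N) ℝ := Matrix.of fun _ _ => (N : ℝ)⁻¹

/-- Mean-field aggregation map `A(z) = ((1/N)·1 1ᵀ ⊗ I_n) x⋆(z)`. -/
def meanAgg {n N : ℕ} (xstar : Fin N → (Fin n → ℝ) → (Fin n → ℝ))
    (z : Fin N × Fin n → ℝ) : Fin N × Fin n → ℝ :=
  ((avgMat N) ⊗ₖ (1 : Matrix (Fin n) (Fin n) ℝ)).mulVec (extMap xstar z)

/-- Maximum-row-sum matrix norm `‖A‖_∞`. -/
def rowSumNorm {N : ℕ} (A : Matrix (Fin N) (Fin N) ℝ) : ℝ := ⨆ i, ∑ j, |A i j|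

/-- Spectral norm (ℓ²-operator norm) of a real matrix. -/
def specNorm {ι : Type*} [Fintype ι] [DecidableEq ι] (P : Matrix ι ι ℝ) : ℝ :=
  ‖LinearMap.toContinuousLinearMap (Matrix.toEuclideanLin P)‖

/-- Map `A_{m,m}(z) = (P^m ⊗ I_n) x⋆((P^m ⊗ I_n) z)`. -/
def halfAgg {n N : ℕ} (P : Matrix (Fin N) (Fin N) ℝ) (m : ℕ)
    (xstar : Fin N → (Fin n → ℝ) → (Fin n → ℝ)) (z : Fin N × Fin n → ℝ) :
    Fin N × Fin n → ℝ :=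
  ((P ^ m) ⊗ₖ (1 : Matrix (Fin n) (Fin n) ℝ)).mulVec
    (extMap xstar (((P ^ m) ⊗ₖ (1 : Matrix (Fin n) (Fin n) ℝ)).mulVec z))

/- ------------------ auxiliary lemmas ------------------ -/

lemma cost_cont {n : ℕ} (Q C : Matrix (Fin n) (Fin n) ℝ) (qi : ℝ) (ci : Fin n → ℝ) :
    Continuous (fun p : (Fin n → ℝ) × (Fin n → ℝ) => cost Q C qi ci p.1 p.2) := by
  unfold cost
  exact (continuous_const.mul
      (continuous_fst.dotProduct (continuous_const.matrix_mulVec continuous_fst))).add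
    (continuous_const.mul
      (((continuous_const.matrix_mulVec continuous_snd).add
        continuous_const).dotProduct continuous_fst))

lemma cost_min_unique {n : ℕ} {X : Set (Fin n → ℝ)} (hXconv : Convex ℝ X)
    {Q : Matrix (Fin n) (Fin n) ℝ} (C : Matrix (Fin n) (Fin n) ℝ) (hQ : Q.PosDef)
    {qi : ℝ} (hqi : 0 < qi) (ci : Fin n → ℝ) (z x y : Fin n → ℝ)
    (hx : x ∈ X) (hy : y ∈ X)
    (hxm : ∀ u ∈ X, cost Q C qi ci x z ≤ cost Q C qi ci u z)
    (hym : ∀ u ∈ X, cost Q C qi ci y z ≤ cost Q C qi ci u z) : x = y := by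
  by_contra hne
  have hd : 0 < (x - y) ⬝ᵥ Q.mulVec (x - y) := by
    have := hQ.dotProduct_mulVec_pos (sub_ne_zero.mpr hne : x - y ≠ 0)
    simpa using this
  have hmX : (1/2 : ℝ) • x + (1/2 : ℝ) • y ∈ X :=
    hXconv hx hy (by norm_num) (by norm_num) (by norm_num)
  have key : cost Q C qi ci ((1/2 : ℝ) • x + (1/2 : ℝ) • y) z =
      (cost Q C qi ci x z + cost Q C qi ci y z)/2 - qi/4 * ((x-y) ⬝ᵥ Q.mulVec (x-y)) := by
    unfold cost
    simp only [Matrix.mulVec_add, Matrix.mulVec_smul, Matrix.mulVec_sub, dotProduct_add,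
      add_dotProduct, dotProduct_sub, sub_dotProduct, dotProduct_smul, smul_dotProduct,
      smul_eq_mul]
    ring
  have h1 := hxm _ hmX
  have h2 := hxm y hy
  have h3 := hym x hx
  nlinarith

lemma isOptResp_continuous {n : ℕ} {X : Set (Fin n → ℝ)} (hXconv : Convex ℝ X)
    (hXcpt : IsCompact X) {Q : Matrix (Fin n) (Fin n) ℝ} (C : Matrix (Fin n) (Fin n) ℝ)
    (hQ : Q.PosDef) {qi : ℝ} (hqi : 0 < qi) (ci : Fin n → ℝ)
    {xst : (Fin n → ℝ) → (Fin n → ℝ)} (h : IsOptResp X Q C qi ci xst) :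
    Continuous xst := by
  rw [continuous_iff_seqContinuous]
  intro z p hz
  apply tendsto_of_subseq_tendsto
  intro ns hns
  obtain ⟨xb, hxbX, φ, hφ, hconv⟩ := hXcpt.tendsto_subseq (fun k => (h (z (ns k))).1)
  have hzz : Tendsto (fun k => z (ns (φ k))) atTop (𝓝 p) :=
    hz.comp (hns.comp hφ.tendsto_atTop)
  have hconv' : Tendsto (fun k => xst (z (ns (φ k)))) atTop (𝓝 xb) := hconv
  have hopt : ∀ y ∈ X, cost Q C qi ci xb p ≤ cost Q C qi ci y p := by
    intro y hy
    have hl := ((cost_cont Q C qi ci).tendsto (xb, p)).comp (hconv'.prodMk_nhds hzz)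
    have hr := ((cost_cont Q C qi ci).tendsto (y, p)).comp
      ((tendsto_const_nhds : Tendsto (fun _ : ℕ => y) atTop (𝓝 y)).prodMk_nhds hzz)
    exact le_of_tendsto_of_tendsto' hl hr (fun k => (h (z (ns (φ k)))).2 y hy)
  have hxbp : xb = xst p :=
    cost_min_unique hXconv C hQ hqi ci p xb (xst p) hxbX (h p).1 hopt (h p).2
  exact ⟨φ, by rw [← hxbp]; exact hconv⟩

lemma kron_mulVec_apply {n N : ℕ} (A : Matrix (Fin N) (Fin N) ℝ) (v : Fin N × Fin n → ℝ)
    (i : Fin N) (m : Fin n) :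
    ((A ⊗ₖ (1 : Matrix (Fin n) (Fin n) ℝ)).mulVec v) (i, m) = ∑ j, A i j * v (j, m) := by
  simp only [Matrix.mulVec, dotProduct, Fintype.sum_prod_type, Matrix.kroneckerMap_apply,
    Matrix.one_apply, mul_ite, mul_one, mul_zero, ite_mul, zero_mul]
  simp

lemma aggMap_apply {n N : ℕ} (P : Matrix (Fin N) (Fin N) ℝ) (ν : ℕ)
    (xstar : Fin N → (Fin n → ℝ) → (Fin n → ℝ)) (w : Fin N × Fin n → ℝ)
    (i : Fin N) (m : Fin n) :
    aggMap P ν xstar w (i, m) = ∑ j, (P ^ ν) i j * extMap xstar w (j, m) :=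
  kron_mulVec_apply _ _ _ _

lemma meanAgg_apply {n N : ℕ} (xstar : Fin N → (Fin n → ℝ) → (Fin n → ℝ))
    (w : Fin N × Fin n → ℝ) (i : Fin N) (m : Fin n) :
    meanAgg xstar w (i, m) = ∑ j, (N : ℝ)⁻¹ * extMap xstar w (j, m) :=
  kron_mulVec_apply _ _ _ _

lemma pow_row_stoch {N : ℕ} (P : Matrix (Fin N) (Fin N) ℝ) (hPnn : ∀ i j, 0 ≤ P i j)
    (hPrs : ∀ i, ∑ j, P i j = 1) (m : ℕ) :
    (∀ i j, 0 ≤ (P ^ m) i j) ∧ ∀ i, ∑ j, (P ^ m) i j = 1 := by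
  induction m with
  | zero =>
    refine ⟨fun i j => ?_, fun i => ?_⟩
    · rw [pow_zero]
      rw [Matrix.one_apply]
      split <;> norm_num
    · rw [pow_zero]
      simp [Matrix.one_apply]
  | succ m ih =>
    rw [pow_succ]
    refine ⟨fun i j => ?_, fun i => ?_⟩
    · rw [Matrix.mul_apply]
      exact Finset.sum_nonneg fun k _ => mul_nonneg (ih.1 i k) (hPnn k j)
    · simp only [Matrix.mul_apply]
      rw [Finset.sum_comm]
      have : ∀ k, ∑ j, (P ^ m) i k * P k j = (P ^ m) i k := by
        intro k
        rw [← Finset.mul_sum, hPrs k, mul_one]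
      rw [Finset.sum_congr rfl fun k _ => this k, ih.2 i]

theorem fixedPoints_aggMap_close_to_fixedPoints_meanAgg {n N : ℕ} (hn : 0 < n) (hN : 0 < N)
    (X : Fin N → Set (Fin n → ℝ))
    (hXne : ∀ i, (X i).Nonempty) (hXconv : ∀ i, Convex ℝ (X i))
    (hXcpt : ∀ i, IsCompact (X i))
    (Q C : Matrix (Fin n) (Fin n) ℝ) (hQ : Q.PosDef)
    (q : Fin N → ℝ) (hq : ∀ i, 0 < q i) (c : Fin N → Fin n → ℝ)
    (P : Matrix (Fin N) (Fin N) ℝ) (hPnn : ∀ i j, 0 ≤ P i j)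
    (hPrs : ∀ i, ∑ j, P i j = 1)
    (hlim : ∀ i j, Tendsto (fun ν : ℕ => (P ^ ν) i j) atTop (𝓝 ((N : ℝ)⁻¹)))
    (xstar : Fin N → (Fin n → ℝ) → (Fin n → ℝ))
    (hxstar : ∀ i, IsOptResp (X i) Q C (q i) (c i) (xstar i)) :
    ∀ ε > (0 : ℝ), ∃ ν' : ℕ, 0 < ν' ∧ ∀ ν ≥ ν',
      ∀ z : Fin N × Fin n → ℝ, aggMap P ν xstar z = z →
        sInf {d : ℝ | ∃ w : Fin N × Fin n → ℝ, meanAgg xstar w = w ∧ d = eunorm (z - w)}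
          ≤ ε := by
  intro ε hε
  by_contra hcon
  push_neg at hcon
  choose ν hν z hagg hgt using fun k : ℕ => hcon (k + 1) k.succ_pos
  have hcx : ∀ i, Continuous (xstar i) := fun i =>
    isOptResp_continuous (hXconv i) (hXcpt i) C hQ (hq i) (c i) (hxstar i)
  -- a uniform coordinate bound on all optimal responses
  choose r hr using fun i => (hXcpt i).isBounded.subset_closedBall 0
  set R : ℝ := ∑ i, |r i| with hRdef
  have hRi : ∀ i, r i ≤ R := fun i =>
    (le_abs_self _).trans (Finset.single_le_sum (f := fun j => |r j|)
      (fun j _ => abs_nonneg _) (Finset.mem_univ i))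
  have hxb : ∀ i w m, |xstar i w m| ≤ R := by
    intro i w m
    have h1 : xstar i w ∈ Metric.closedBall 0 (r i) := hr i ((hxstar i w).1)
    have h2 : ‖xstar i w‖ ≤ r i := by simpa using h1
    calc |xstar i w m| = ‖xstar i w m‖ := (Real.norm_eq_abs _).symm
      _ ≤ ‖xstar i w‖ := norm_le_pi_norm _ m
      _ ≤ R := h2.trans (hRi i)
  have hpow := pow_row_stoch P hPnn hPrs
  -- fixed points of aggMap live in a compact cube
  set K : Set (Fin N × Fin n → ℝ) := Set.pi Set.univ fun _ => Set.Icc (-R) R with hKdef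
  have hK : IsCompact K := isCompact_univ_pi fun _ => isCompact_Icc
  have hzK : ∀ k, z k ∈ K := by
    intro k
    rw [hKdef, Set.mem_univ_pi]
    rintro ⟨i, m⟩
    have heq : z k (i, m) = ∑ j, (P ^ ν k) i j * extMap xstar (z k) (j, m) := by
      conv_lhs => rw [← hagg k]
      exact aggMap_apply _ _ _ _ _ _
    have habs : |z k (i, m)| ≤ R := by
      rw [heq]
      calc |∑ j, (P ^ ν k) i j * extMap xstar (z k) (j, m)|
          ≤ ∑ j, |(P ^ ν k) i j * extMap xstar (z k) (j, m)| :=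
            Finset.abs_sum_le_sum_abs _ _
        _ ≤ ∑ j, (P ^ ν k) i j * R := by
            refine Finset.sum_le_sum fun j _ => ?_
            rw [abs_mul, abs_of_nonneg ((hpow (ν k)).1 i j)]
            exact mul_le_mul_of_nonneg_left (hxb j _ m) ((hpow (ν k)).1 i j)
        _ = R := by rw [← Finset.sum_mul, (hpow (ν k)).2 i, one_mul]
    exact Set.mem_Icc.mpr (abs_le.mp habs)
  obtain ⟨zb, hzbK, φ, hφ, hφt⟩ := hK.tendsto_subseq hzK
  have hνφ : Tendsto (fun k => ν (φ k)) atTop atTop :=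
    tendsto_atTop_mono (fun k => le_trans (le_trans hφ.le_apply (Nat.le_succ _)) (hν (φ k)))
      tendsto_id
  have hext : ∀ (j : Fin N) (m : Fin n),
      Continuous fun w : Fin N × Fin n → ℝ => extMap xstar w (j, m) := by
    intro j m
    have h1 : Continuous fun w : Fin N × Fin n → ℝ => xstar j (fun l => w (j, l)) :=
      (hcx j).comp (continuous_pi fun l => continuous_apply (j, l))
    exact (continuous_apply m).comp h1
  -- the limit is a fixed point of meanAgg
  have hfix : meanAgg xstar zb = zb := by
    funext p
    obtain ⟨i, m⟩ := p
    have hL : Tendsto (fun k => z (φ k) (i, m)) atTop (𝓝 (zb (i, m))) :=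
      ((continuous_apply (i, m)).tendsto zb).comp hφt
    have hR : Tendsto (fun k => ∑ j, (P ^ ν (φ k)) i j * extMap xstar (z (φ k)) (j, m)) atTop
        (𝓝 (∑ j, (N : ℝ)⁻¹ * extMap xstar zb (j, m))) := by
      refine tendsto_finset_sum _ fun j _ => ?_
      exact ((hlim i j).comp hνφ).mul (((hext j m).tendsto zb).comp hφt)
    have hL' : Tendsto (fun k => ∑ j, (P ^ ν (φ k)) i j * extMap xstar (z (φ k)) (j, m)) atTop
        (𝓝 (zb (i, m))) := by
      refine hL.congr fun k => ?_
      conv_lhs => rw [← hagg (φ k)]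
      exact aggMap_apply _ _ _ _ _ _
    rw [meanAgg_apply]
    exact (tendsto_nhds_unique hL' hR).symm
  -- contradiction
  have h0 : Tendsto (fun k => z (φ k) - zb) atTop (𝓝 0) := by
    simpa using hφt.sub (tendsto_const_nhds : Tendsto (fun _ : ℕ => zb) atTop (𝓝 zb))
  have hcn : Continuous fun v : Fin N × Fin n → ℝ => eunorm v := by
    unfold eunorm
    exact Real.continuous_sqrt.comp (continuous_id.dotProduct continuous_id)
  have hsub : Tendsto (fun k => eunorm (z (φ k) - zb)) atTop (𝓝 0) := by
    have h1 := (hcn.tendsto 0).comp h0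
    rw [show eunorm (0 : Fin N × Fin n → ℝ) = 0 from by simp [eunorm]] at h1
    exact h1
  obtain ⟨k, hk⟩ := (hsub.eventually (gt_mem_nhds hε)).exists
  have hle : sInf {d : ℝ | ∃ w : Fin N × Fin n → ℝ, meanAgg xstar w = w ∧
      d = eunorm (z (φ k) - w)} ≤ eunorm (z (φ k) - zb) := by
    apply csInf_le
    · refine ⟨0, ?_⟩
      rintro d ⟨w, -, rfl⟩
      exact Real.sqrt_nonneg _
    · exact ⟨zb, hfix, rfl⟩
  have := hgt (φ k)
  linarith
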